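/- For all positive integers s, r with r ≥ s ≥ 2 and r > 2s − 2, the minimum n such that every 2-coloring of [1,n] admits monochromatic subsets S₁, S₂ with |S₁| = s, |S₂| = r, max(S₁) < min(S₂), and diam(S₁) ≤ diam(S₂), equals 2s + 2r − 2. -/

import Mathlib

open Finset

/-- diameter of a finite set of naturals -/
def diam (S : Finset ℕ) : ℕ := (S.max.getD 0) - (S.min.getD 0)

/-- S is monochromatic under a coloring -/
def Mono {α : Type*} (f : ℕ → α) (S : Finset ℕ) : Prop := ∀ a ∈ S, ∀ b ∈ S, f a = f b

/-- S is zero-sum mod m under an integer coloring -/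
def ZeroSum (f : ℕ → ℤ) (m : ℕ) (S : Finset ℕ) : Prop := (m : ℤ) ∣ ∑ x ∈ S, f x

/-- every element of S colored ∞ (= none) -/
def InftyMono (f : ℕ → Option ℤ) (S : Finset ℕ) : Prop := ∀ x ∈ S, f x = none

/-- S consists of ℤ-colored elements and is zero-sum mod m -/
def ZeroSumOpt (f : ℕ → Option ℤ) (m : ℕ) (S : Finset ℕ) : Prop :=
  (∀ x ∈ S, (f x).isSome) ∧ (m : ℤ) ∣ ∑ x ∈ S, (f x).getD 0

lemma diam_eq (S : Finset ℕ) (h : S.Nonempty) : diam S = S.max' h - S.min' h := by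
  unfold diam
  rw [← Finset.coe_max' h, ← Finset.coe_min' h]
  rfl

lemma diam_le_of_subset_Icc {S : Finset ℕ} {a b : ℕ} (hS : S ⊆ Finset.Icc a b) :
    diam S ≤ b - a := by
  rcases S.eq_empty_or_nonempty with rfl | h
  · unfold diam
    rw [Finset.max_empty, Finset.min_empty]
    exact Nat.zero_le _
  · rw [diam_eq S h]
    have h1 := Finset.mem_Icc.mp (hS (S.max'_mem h))
    have h2 := Finset.mem_Icc.mp (hS (S.min'_mem h))
    omega

lemma card_le_diam (S : Finset ℕ) (h : S.Nonempty) : S.card ≤ diam S + 1 := by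
  have hsub : S ⊆ Finset.Icc (S.min' h) (S.max' h) := fun x hx =>
    Finset.mem_Icc.mpr ⟨Finset.min'_le _ _ hx, Finset.le_max' _ _ hx⟩
  have h1 := Finset.card_le_card hsub
  rw [Nat.card_Icc] at h1
  have h2 := S.min'_le (S.max' h) (S.max'_mem h)
  rw [diam_eq S h]
  omega

lemma exists_mono_subset (Δ : ℕ → Fin 2) (T : Finset ℕ) (k : ℕ)
    (h : 2 * k - 1 ≤ T.card) (hk : 1 ≤ k) :
    ∃ S ⊆ T, S.card = k ∧ Mono Δ S := by
  have hsum := Finset.card_filter_add_card_filter_not (s := T)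
    (p := fun i => Δ i = 0)
  have hcase : k ≤ (T.filter (fun i => Δ i = 0)).card ∨
      k ≤ (T.filter (fun i => ¬ (Δ i = 0))).card := by omega
  rcases hcase with hc | hc
  · obtain ⟨S, hS, hSc⟩ := Finset.exists_subset_card_eq hc
    refine ⟨S, hS.trans (Finset.filter_subset _ _), hSc, ?_⟩
    intro a ha b hb
    have h1 := (Finset.mem_filter.mp (hS ha)).2
    have h2 := (Finset.mem_filter.mp (hS hb)).2
    rw [h1, h2]
  · obtain ⟨S, hS, hSc⟩ := Finset.exists_subset_card_eq hc
    refine ⟨S, hS.trans (Finset.filter_subset _ _), hSc, ?_⟩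
    intro a ha b hb
    have h1 := (Finset.mem_filter.mp (hS ha)).2
    have h2 := (Finset.mem_filter.mp (hS hb)).2
    have e1 : Δ a = 1 := by omega
    have e2 : Δ b = 1 := by omega
    rw [e1, e2]

/-- the extremal coloring for the lower bound -/
def badColoring (s r : ℕ) : ℕ → Fin 2 := fun i =>
  if (s ≤ i ∧ i ≤ 2 * s - 2) ∨ (2 * s + r - 1 ≤ i) then 1 else 0

lemma badColoring_one {s r i : ℕ} :
    badColoring s r i = 1 ↔ ((s ≤ i ∧ i ≤ 2 * s - 2) ∨ (2 * s + r - 1 ≤ i)) := by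
  unfold badColoring
  split_ifs with h
  · exact iff_of_true rfl h
  · exact iff_of_false (by decide) h

/-- no monochromatic s-set fits inside [1, 2s-2] under badColoring -/
lemma no_small_mono (s r : ℕ) (hs : 2 ≤ s) (S : Finset ℕ)
    (hmono : Mono (badColoring s r) S) (hcard : S.card = s)
    (hlb : ∀ a ∈ S, 1 ≤ a) (hub : ∀ a ∈ S, a ≤ 2 * s - 2) : False := by
  have hne : S.Nonempty := Finset.card_pos.mp (by omega)
  obtain ⟨x, hx⟩ := hne
  rcases (by omega : badColoring s r x = 0 ∨ badColoring s r x = 1) with hc | hc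
  · have hsub : S ⊆ Finset.Icc 1 (s - 1) := by
      intro a ha
      have hca : badColoring s r a = 0 := (hmono a ha x hx).trans hc
      have : ¬ ((s ≤ a ∧ a ≤ 2 * s - 2) ∨ (2 * s + r - 1 ≤ a)) := by
        rw [← badColoring_one]
        omega
      have := hub a ha
      have := hlb a ha
      rw [Finset.mem_Icc]
      omega
    have := Finset.card_le_card hsub
    rw [hcard, Nat.card_Icc] at this
    omega
  · have hsub : S ⊆ Finset.Icc s (2 * s - 2) := by
      intro a ha
      have hca : badColoring s r a = 1 := (hmono a ha x hx).trans hc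
      have := badColoring_one.mp hca
      have := hub a ha
      rw [Finset.mem_Icc]
      omega
    have := Finset.card_le_card hsub
    rw [hcard, Nat.card_Icc] at this
    omega

theorem stmt1 (s r : ℕ) (hs : 2 ≤ s) (hsr : s ≤ r) (hr : 2 * s - 2 < r) :
    IsLeast {n : ℕ | ∀ Δ : ℕ → Fin 2, ∃ S₁ S₂ : Finset ℕ,
    S₁ ⊆ Finset.Icc 1 n ∧ S₂ ⊆ Finset.Icc 1 n ∧
    Mono Δ S₁ ∧ Mono Δ S₂ ∧ S₁.card = s ∧ S₂.card = r ∧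
    (∀ a ∈ S₁, ∀ b ∈ S₂, a < b) ∧ diam S₁ ≤ diam S₂} (2 * s + 2 * r - 2) := by
  constructor
  · -- membership: n = 2s + 2r - 2 works
    intro Δ
    obtain ⟨S₁, hS₁T, hS₁c, hS₁m⟩ := exists_mono_subset Δ (Finset.Icc 1 (2 * s - 1)) s
      (by rw [Nat.card_Icc]; omega) (by omega)
    obtain ⟨S₂, hS₂T, hS₂c, hS₂m⟩ := exists_mono_subset Δ
      (Finset.Icc (2 * s) (2 * s + 2 * r - 2)) r (by rw [Nat.card_Icc]; omega) (by omega)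
    have hne₂ : S₂.Nonempty := Finset.card_pos.mp (by omega)
    refine ⟨S₁, S₂, ?_, ?_, hS₁m, hS₂m, hS₁c, hS₂c, ?_, ?_⟩
    · intro a ha
      have := Finset.mem_Icc.mp (hS₁T ha)
      rw [Finset.mem_Icc]; omega
    · intro a ha
      have := Finset.mem_Icc.mp (hS₂T ha)
      rw [Finset.mem_Icc]; omega
    · intro a ha b hb
      have := Finset.mem_Icc.mp (hS₁T ha)
      have := Finset.mem_Icc.mp (hS₂T hb)
      omega
    · have h1 : diam S₁ ≤ 2 * s - 1 - 1 := diam_le_of_subset_Icc hS₁T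
      have h2 : S₂.card ≤ diam S₂ + 1 := card_le_diam S₂ hne₂
      omega
  · -- lower bound
    intro n hn
    by_contra hlt
    push_neg at hlt
    obtain ⟨S₁, S₂, hS₁, hS₂, hm₁, hm₂, hc₁, hc₂, hord, _⟩ := hn (badColoring s r)
    have hne₂ : S₂.Nonempty := Finset.card_pos.mp (by omega)
    set m := S₂.min' hne₂ with hm
    have hmmem : m ∈ S₂ := S₂.min'_mem hne₂
    have hS₁lb : ∀ a ∈ S₁, 1 ≤ a := fun a ha => (Finset.mem_Icc.mp (hS₁ ha)).1
    rcases le_or_gt m (2 * s - 2) with hcase | hcase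
    · exact no_small_mono s r hs S₁ hm₁ hc₁ hS₁lb
        (fun a ha => by have := hord a ha m hmmem; omega)
    · -- m ≥ 2s - 1
      obtain ⟨x, hx⟩ := hne₂
      rcases (by omega : badColoring s r x = 0 ∨ badColoring s r x = 1) with hc | hc
      · -- S₂ color 0, forced to be Icc (2s-1) (2s+r-2)
        have hsub : S₂ ⊆ Finset.Icc (2 * s - 1) (2 * s + r - 2) := by
          intro b hb
          have hcb : badColoring s r b = 0 := (hm₂ b hb x hx).trans hc
          have : ¬ ((s ≤ b ∧ b ≤ 2 * s - 2) ∨ (2 * s + r - 1 ≤ b)) := by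
            rw [← badColoring_one]; omega
          have hbm : m ≤ b := S₂.min'_le b hb
          rw [Finset.mem_Icc]
          omega
        have heq : S₂ = Finset.Icc (2 * s - 1) (2 * s + r - 2) :=
          Finset.eq_of_subset_of_card_le hsub (by rw [Nat.card_Icc]; omega)
        have hmem : 2 * s - 1 ∈ S₂ := by
          rw [heq, Finset.mem_Icc]; omega
        exact no_small_mono s r hs S₁ hm₁ hc₁ hS₁lb
          (fun a ha => by have := hord a ha _ hmem; omega)
      · -- S₂ color 1, must live in [2s+r-1, n], too few elements
        have hsub : S₂ ⊆ Finset.Icc (2 * s + r - 1) (2 * s + 2 * r - 3) := by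
          intro b hb
          have hcb : badColoring s r b = 1 := (hm₂ b hb x hx).trans hc
          have h1 := badColoring_one.mp hcb
          have hbm : m ≤ b := S₂.min'_le b hb
          have hbn := (Finset.mem_Icc.mp (hS₂ hb)).2
          rw [Finset.mem_Icc]
          omega
        have := Finset.card_le_card hsub
        rw [hc₂, Nat.card_Icc] at this
        omega
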